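/- Let a_1, a_2, a_3, b_1, b_2, b_3 > 0 satisfy a_1+a_2+a_3 ≤ b_1+b_2+b_3, a_1a_2+a_1a_3+a_2a_3 ≤ b_1b_2+b_1b_3+b_2b_3, and a_1a_2a_3 = b_1b_2b_3. Then (log a_1)^2+(log a_2)^2+(log a_3)^2 ≤ (log b_1)^2+(log b_2)^2+(log b_3)^2. -/

import Mathlib

open MeasureTheory Real Set Filter Topology

/-- The integrand: `(log (x+t) + log (x⁻¹+t) - 2 log (1+t)) / t`. -/
noncomputable def sqLogKer (x t : ℝ) : ℝ :=
  (Real.log (x + t) + Real.log (x⁻¹ + t) - 2 * Real.log (1 + t)) / t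

lemma sqLogKer_bounds {x t : ℝ} (hx : 0 < x) (ht : 0 < t) :
    0 ≤ sqLogKer x t ∧ sqLogKer x t ≤ (x + x⁻¹ - 2) * (1 + t ^ 2)⁻¹ := by
  have hxi : 0 < x⁻¹ := inv_pos.2 hx
  have h1 : (0:ℝ) < x + t := by linarith
  have h2 : (0:ℝ) < x⁻¹ + t := by linarith
  have h3 : (0:ℝ) < 1 + t := by linarith
  have hc : 0 ≤ x + x⁻¹ - 2 := by
    have h := sq_nonneg (x - 1)
    have : x * (x + x⁻¹ - 2) = (x - 1) ^ 2 := by field_simp; ring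
    nlinarith
  have hu : (0:ℝ) < (x + t) * (x⁻¹ + t) := mul_pos h1 h2
  have hv : (0:ℝ) < (1 + t) ^ 2 := by positivity
  have huv : (1 + t) ^ 2 ≤ (x + t) * (x⁻¹ + t) := by
    have hxx : x * x⁻¹ = 1 := mul_inv_cancel₀ hx.ne'
    nlinarith [mul_nonneg hc ht.le]
  have hN : Real.log (x + t) + Real.log (x⁻¹ + t) - 2 * Real.log (1 + t)
      = Real.log ((x + t) * (x⁻¹ + t) / (1 + t) ^ 2) := by
    rw [Real.log_div hu.ne' hv.ne', Real.log_mul h1.ne' h2.ne', Real.log_pow]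
    push_cast; ring
  constructor
  · apply div_nonneg _ ht.le
    rw [hN]
    apply Real.log_nonneg
    rw [le_div_iff₀ hv]
    linarith
  · rw [sqLogKer, hN, div_le_iff₀ ht]
    have hlog : Real.log ((x + t) * (x⁻¹ + t) / (1 + t) ^ 2)
        ≤ (x + t) * (x⁻¹ + t) / (1 + t) ^ 2 - 1 :=
      Real.log_le_sub_one_of_pos (by positivity)
    have hxx : x * x⁻¹ = 1 := mul_inv_cancel₀ hx.ne'
    have hkey : (x + t) * (x⁻¹ + t) / (1 + t) ^ 2 - 1 = (x + x⁻¹ - 2) * t / (1 + t) ^ 2 := by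
      field_simp
      nlinarith [hxx]
    calc Real.log ((x + t) * (x⁻¹ + t) / (1 + t) ^ 2)
        ≤ (x + x⁻¹ - 2) * t / (1 + t) ^ 2 := by rw [← hkey]; exact hlog
      _ ≤ (x + x⁻¹ - 2) * t / (1 + t ^ 2) :=
          div_le_div_of_nonneg_left (mul_nonneg hc ht.le) (by positivity) (by nlinarith)
      _ = (x + x⁻¹ - 2) * (1 + t ^ 2)⁻¹ * t := by ring

lemma sqLogKer_contOn {x : ℝ} (hx : 0 < x) : ContinuousOn (sqLogKer x) (Ioi 0) := by
  intro t ht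
  have ht' : (0:ℝ) < t := ht
  have h1 : x + t ≠ 0 := by positivity
  have h2 : x⁻¹ + t ≠ 0 := by positivity
  have h3 : (1:ℝ) + t ≠ 0 := by positivity
  have c1 : ContinuousAt (fun s : ℝ => Real.log (x + s)) t :=
    (continuousAt_const.add continuousAt_id).log h1
  have c2 : ContinuousAt (fun s : ℝ => Real.log (x⁻¹ + s)) t :=
    (continuousAt_const.add continuousAt_id).log h2
  have c3 : ContinuousAt (fun s : ℝ => Real.log (1 + s)) t :=
    (continuousAt_const.add continuousAt_id).log h3
  have : ContinuousAt (sqLogKer x) t :=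
    ((c1.add c2).sub (continuousAt_const.mul c3)).div continuousAt_id ht'.ne'
  exact this.continuousWithinAt

lemma sqLogKer_integrable {x : ℝ} (hx : 0 < x) :
    IntegrableOn (sqLogKer x) (Ioi 0) := by
  have hc : 0 ≤ x + x⁻¹ - 2 := by
    have : x * (x + x⁻¹ - 2) = (x - 1) ^ 2 := by field_simp; ring
    nlinarith [sq_nonneg (x - 1)]
  apply Integrable.mono' ((integrable_inv_one_add_sq.const_mul (x + x⁻¹ - 2)).restrict (s := Ioi 0))
  · exact (sqLogKer_contOn hx).aestronglyMeasurable measurableSet_Ioi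
  · filter_upwards [ae_restrict_mem measurableSet_Ioi] with t ht
    obtain ⟨h0, h1⟩ := sqLogKer_bounds hx (mem_Ioi.mp ht)
    rw [Real.norm_eq_abs, abs_of_nonneg h0]
    exact h1

/-- derivative of the kernel in `x` -/
noncomputable def sqLogKer' (x t : ℝ) : ℝ := (x ^ 2 - 1) / ((x + t) * (x + x ^ 2 * t))

lemma sqLogKer'_contOn {x : ℝ} (hx : 0 < x) : ContinuousOn (sqLogKer' x) (Ioi 0) := by
  intro t ht
  have ht' : (0:ℝ) < t := ht
  have h1 : (x + t) * (x + x ^ 2 * t) ≠ 0 := by positivity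
  have : ContinuousAt (sqLogKer' x) t :=
    continuousAt_const.div
      ((continuousAt_const.add continuousAt_id).mul
        (continuousAt_const.add (continuousAt_const.mul continuousAt_id))) h1
  exact this.continuousWithinAt

lemma sqLogKer_hasDeriv {y t : ℝ} (hy : 0 < y) (ht : 0 < t) :
    HasDerivAt (fun z => sqLogKer z t) (sqLogKer' y t) y := by
  have h1 : y + t ≠ 0 := by positivity
  have h2 : y⁻¹ + t ≠ 0 := by positivity
  have d1 : HasDerivAt (fun z : ℝ => Real.log (z + t)) (1 / (y + t)) y := by
    simpa using ((hasDerivAt_id y).add_const t).log h1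
  have d2 : HasDerivAt (fun z : ℝ => Real.log (z⁻¹ + t)) (-(y ^ 2)⁻¹ / (y⁻¹ + t)) y :=
    ((hasDerivAt_inv hy.ne').add_const t).log h2
  have d3 : HasDerivAt (fun z : ℝ =>
      (Real.log (z + t) + Real.log (z⁻¹ + t) - 2 * Real.log (1 + t)) / t)
      ((1 / (y + t) + -(y ^ 2)⁻¹ / (y⁻¹ + t) - 0) / t) y :=
    ((d1.add d2).sub (hasDerivAt_const y (2 * Real.log (1 + t)))).div_const t
  convert d3 using 1
  · rfl
  rw [sqLogKer']
  field_simp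
  ring

lemma sqLogKer_integral_hasDeriv {x : ℝ} (hx : 0 < x) :
    HasDerivAt (fun y => ∫ t in Ioi (0:ℝ), sqLogKer y t) (2 * Real.log x / x) x := by
  have hε : (0:ℝ) < x / 2 := by linarith
  have key := hasDerivAt_integral_of_dominated_loc_of_deriv_le (μ := volume.restrict (Ioi 0))
    (F := sqLogKer) (F' := sqLogKer') (x₀ := x)
    (bound := fun t => (9 / 4 * x ^ 2 + 1) * (4 / x ^ 2) * (1 + t ^ 2)⁻¹) (Metric.ball_mem_nhds x hε)
    ?_ (sqLogKer_integrable hx) ?_ ?_ ?_ ?_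
  · obtain ⟨hint, hderiv⟩ := key
    have hval : ∫ t in Ioi (0:ℝ), sqLogKer' x t = 2 * Real.log x / x := by
      have hG : ∀ t ∈ Ici (0:ℝ), HasDerivAt
          (fun t => (Real.log (1 + x * t) - Real.log (x + t)) / x) (sqLogKer' x t) t := by
        intro t ht
        have ht' : (0:ℝ) ≤ t := ht
        have h1 : (1:ℝ) + x * t ≠ 0 := by positivity
        have h2 : x + t ≠ 0 := by positivity
        have d1 : HasDerivAt (fun t : ℝ => Real.log (1 + x * t)) (x / (1 + x * t)) t := by
          simpa using (((hasDerivAt_id t).const_mul x).const_add 1).log h1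
        have d2 : HasDerivAt (fun t : ℝ => Real.log (x + t)) (1 / (x + t)) t := by
          simpa using ((hasDerivAt_id t).const_add x).log h2
        have : HasDerivAt (fun t => (Real.log (1 + x * t) - Real.log (x + t)) / x)
            ((x / (1 + x * t) - 1 / (x + t)) / x) t := (d1.sub d2).div_const x
        convert this using 1
        rw [sqLogKer']
        field_simp
        ring
      have hlim : Tendsto (fun t => (Real.log (1 + x * t) - Real.log (x + t)) / x) atTop
          (𝓝 (Real.log x / x)) := by
        have l2 : Tendsto (fun t : ℝ => (t⁻¹ + x) / (x * t⁻¹ + 1)) atTop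
            (𝓝 ((0 + x) / (x * 0 + 1))) :=
          Tendsto.div (tendsto_inv_atTop_zero.add tendsto_const_nhds)
            ((tendsto_inv_atTop_zero.const_mul x).add tendsto_const_nhds) (by norm_num)
        have hxval : ((0:ℝ) + x) / (x * 0 + 1) = x := by norm_num
        rw [hxval] at l2
        have l1 : Tendsto (fun t : ℝ => (1 + x * t) / (x + t)) atTop (𝓝 x) := by
          apply l2.congr'
          filter_upwards [eventually_gt_atTop (0:ℝ)] with t ht
          rw [div_eq_div_iff (by positivity) (by positivity)]
          first
          | (field_simp; ring)
          | field_simp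
        have l3 : Tendsto (fun t : ℝ => Real.log ((1 + x * t) / (x + t))) atTop
            (𝓝 (Real.log x)) := ((Real.continuousAt_log hx.ne').tendsto).comp l1
        have l4 := l3.div_const x
        apply l4.congr'
        filter_upwards [eventually_gt_atTop (0:ℝ)] with t ht
        rw [Real.log_div (by positivity) (by positivity)]
      have := integral_Ioi_of_hasDerivAt_of_tendsto' hG hint hlim
      rw [this]
      simp only [mul_zero, add_zero, Real.log_one]
      ring
    rwa [hval] at hderiv
  · filter_upwards [eventually_gt_nhds hx] with y hy
    exact (sqLogKer_contOn hy).aestronglyMeasurable measurableSet_Ioi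
  · exact (sqLogKer'_contOn hx).aestronglyMeasurable measurableSet_Ioi
  · filter_upwards [ae_restrict_mem measurableSet_Ioi] with t ht y hy
    have ht' : (0:ℝ) < t := ht
    rw [Metric.mem_ball, Real.dist_eq, abs_lt] at hy
    have hy1 : x / 2 < y := by linarith [hy.1]
    have hy2 : y < 3 / 2 * x := by linarith [hy.2]
    have hy0 : 0 < y := lt_trans hε hy1
    rw [sqLogKer', Real.norm_eq_abs, abs_div, abs_of_pos (by positivity :
      (0:ℝ) < (y + t) * (y + y ^ 2 * t))]
    have hnum : |y ^ 2 - 1| ≤ 9 / 4 * x ^ 2 + 1 := by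
      rw [abs_le]; constructor <;> nlinarith
    have hden : x ^ 2 / 4 * (1 + t ^ 2) ≤ (y + t) * (y + y ^ 2 * t) := by
      have hysq : x ^ 2 / 4 ≤ y ^ 2 := by nlinarith
      nlinarith [mul_pos hy0 ht', mul_pos (mul_pos (mul_pos hy0 hy0) hy0) ht',
        mul_le_mul_of_nonneg_right hysq (sq_nonneg t)]
    have hden0 : (0:ℝ) < x ^ 2 / 4 * (1 + t ^ 2) := by positivity
    calc |y ^ 2 - 1| / ((y + t) * (y + y ^ 2 * t))
        ≤ (9 / 4 * x ^ 2 + 1) / (x ^ 2 / 4 * (1 + t ^ 2)) := by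
          apply div_le_div₀ (by positivity) hnum hden0 hden
      _ = (9 / 4 * x ^ 2 + 1) * (4 / x ^ 2) * (1 + t ^ 2)⁻¹ := by
          first
          | (field_simp; ring)
          | field_simp
  · apply Integrable.const_mul
    exact integrable_inv_one_add_sq.restrict
  · filter_upwards [ae_restrict_mem measurableSet_Ioi] with t ht y hy
    rw [Metric.mem_ball, Real.dist_eq, abs_lt] at hy
    have hy0 : 0 < y := by linarith [hy.1]
    exact sqLogKer_hasDeriv hy0 (mem_Ioi.mp ht)

lemma sqLogKer_integral_eq {x : ℝ} (hx : 0 < x) :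
    ∫ t in Ioi (0:ℝ), sqLogKer x t = (Real.log x) ^ 2 := by
  have h1 : ∫ t in Ioi (0:ℝ), sqLogKer 1 t = 0 := by
    have hz : ∀ t : ℝ, sqLogKer 1 t = 0 := by
      intro t
      rw [sqLogKer, inv_one]
      ring
    simp [hz]
  have hsub : uIcc 1 x ⊆ Ioi (0:ℝ) := by
    intro y hy
    rcases le_total 1 x with h | h
    · rw [uIcc_of_le h] at hy; exact lt_of_lt_of_le one_pos hy.1
    · rw [uIcc_of_ge h] at hy; exact lt_of_lt_of_le hx hy.1
  have hd1 : ∀ y ∈ uIcc 1 x, HasDerivAt (fun y => ∫ t in Ioi (0:ℝ), sqLogKer y t)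
      (2 * Real.log y / y) y := fun y hy => sqLogKer_integral_hasDeriv (hsub hy)
  have hd2 : ∀ y ∈ uIcc 1 x, HasDerivAt (fun y => (Real.log y) ^ 2)
      (2 * Real.log y / y) y := by
    intro y hy
    have hy0 : (0:ℝ) < y := hsub hy
    have : HasDerivAt (fun y => Real.log y ^ 2) (((2:ℕ):ℝ) * Real.log y ^ (2-1) * y⁻¹) y := (Real.hasDerivAt_log hy0.ne').pow 2
    convert this using 1
    first
    | (field_simp; ring)
    | field_simp
  have hintg : IntervalIntegrable (fun y => 2 * Real.log y / y) volume 1 x := by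
    apply ContinuousOn.intervalIntegrable
    intro y hy
    have hy0 : (0:ℝ) < y := hsub hy
    have : ContinuousAt (fun y : ℝ => 2 * Real.log y / y) y :=
      (continuousAt_const.mul (Real.continuousAt_log hy0.ne')).div continuousAt_id hy0.ne'
    exact this.continuousWithinAt
  have e1 := intervalIntegral.integral_eq_sub_of_hasDerivAt hd1 hintg
  have e2 := intervalIntegral.integral_eq_sub_of_hasDerivAt hd2 hintg
  have e3 := e1.symm.trans e2
  simp only [Real.log_one, h1] at e3
  norm_num at e3
  linarith [e3]

theorem sum_of_squared_logarithms_three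
    (a₁ a₂ a₃ b₁ b₂ b₃ : ℝ)
    (ha₁ : 0 < a₁) (ha₂ : 0 < a₂) (ha₃ : 0 < a₃)
    (hb₁ : 0 < b₁) (hb₂ : 0 < b₂) (hb₃ : 0 < b₃)
    (h1 : a₁ + a₂ + a₃ ≤ b₁ + b₂ + b₃)
    (h2 : a₁ * a₂ + a₁ * a₃ + a₂ * a₃ ≤ b₁ * b₂ + b₁ * b₃ + b₂ * b₃)
    (h3 : a₁ * a₂ * a₃ = b₁ * b₂ * b₃) :
    (Real.log a₁) ^ 2 + (Real.log a₂) ^ 2 + (Real.log a₃) ^ 2 ≤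
      (Real.log b₁) ^ 2 + (Real.log b₂) ^ 2 + (Real.log b₃) ^ 2 := by
  have iA : IntegrableOn (fun t => sqLogKer a₁ t + sqLogKer a₂ t + sqLogKer a₃ t) (Ioi 0) :=
    ((sqLogKer_integrable ha₁).add (sqLogKer_integrable ha₂)).add (sqLogKer_integrable ha₃)
  have iB : IntegrableOn (fun t => sqLogKer b₁ t + sqLogKer b₂ t + sqLogKer b₃ t) (Ioi 0) :=
    ((sqLogKer_integrable hb₁).add (sqLogKer_integrable hb₂)).add (sqLogKer_integrable hb₃)
  have iA12 : IntegrableOn (fun t => sqLogKer a₁ t + sqLogKer a₂ t) (Ioi 0) :=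
    (sqLogKer_integrable ha₁).add (sqLogKer_integrable ha₂)
  have iB12 : IntegrableOn (fun t => sqLogKer b₁ t + sqLogKer b₂ t) (Ioi 0) :=
    (sqLogKer_integrable hb₁).add (sqLogKer_integrable hb₂)
  have key : (∫ t in Ioi (0:ℝ), (sqLogKer a₁ t + sqLogKer a₂ t + sqLogKer a₃ t))
      ≤ ∫ t in Ioi (0:ℝ), (sqLogKer b₁ t + sqLogKer b₂ t + sqLogKer b₃ t) := by
    apply setIntegral_mono_on iA iB measurableSet_Ioi
    intro t ht
    have ht' : (0:ℝ) < t := ht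
    -- pointwise inequality
    simp only [sqLogKer]
    rw [← add_div, ← add_div, ← add_div, ← add_div,
      div_le_div_iff₀ ht' ht']
    have hP : (a₁ + t) * (a₂ + t) * (a₃ + t) ≤ (b₁ + t) * (b₂ + t) * (b₃ + t) := by
      nlinarith [mul_le_mul_of_nonneg_right h1 (sq_nonneg t), mul_le_mul_of_nonneg_right h2 ht'.le]
    have hQ : (a₁⁻¹ + t) * (a₂⁻¹ + t) * (a₃⁻¹ + t) ≤ (b₁⁻¹ + t) * (b₂⁻¹ + t) * (b₃⁻¹ + t) := by
      rw [show (a₁⁻¹ + t) * (a₂⁻¹ + t) * (a₃⁻¹ + t)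
          = ((1 + a₁ * t) * (1 + a₂ * t) * (1 + a₃ * t)) / (a₁ * a₂ * a₃) by field_simp,
        show (b₁⁻¹ + t) * (b₂⁻¹ + t) * (b₃⁻¹ + t)
          = ((1 + b₁ * t) * (1 + b₂ * t) * (1 + b₃ * t)) / (b₁ * b₂ * b₃) by field_simp,
        ← h3]
      apply div_le_div₀ (by positivity) _ (by positivity) le_rfl
      nlinarith [mul_le_mul_of_nonneg_right h1 ht'.le, mul_le_mul_of_nonneg_right h2 (sq_nonneg t),
        mul_le_mul_of_nonneg_right h3.le (pow_nonneg ht'.le 3)]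
    have la : Real.log (a₁ + t) + Real.log (a₂ + t) + Real.log (a₃ + t)
        ≤ Real.log (b₁ + t) + Real.log (b₂ + t) + Real.log (b₃ + t) := by
      have h := Real.log_le_log (by positivity) hP
      rwa [Real.log_mul (by positivity) (by positivity),
        Real.log_mul (by positivity) (by positivity),
        Real.log_mul (by positivity) (by positivity),
        Real.log_mul (by positivity) (by positivity)] at h
    have lb : Real.log (a₁⁻¹ + t) + Real.log (a₂⁻¹ + t) + Real.log (a₃⁻¹ + t)
        ≤ Real.log (b₁⁻¹ + t) + Real.log (b₂⁻¹ + t) + Real.log (b₃⁻¹ + t) := by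
      have h := Real.log_le_log (by positivity) hQ
      rwa [Real.log_mul (by positivity) (by positivity),
        Real.log_mul (by positivity) (by positivity),
        Real.log_mul (by positivity) (by positivity),
        Real.log_mul (by positivity) (by positivity)] at h
    nlinarith [mul_le_mul_of_nonneg_right (add_le_add la lb) ht'.le]
  rw [integral_add iA12 (sqLogKer_integrable ha₃), integral_add (sqLogKer_integrable ha₁)
      (sqLogKer_integrable ha₂), integral_add iB12 (sqLogKer_integrable hb₃),
    integral_add (sqLogKer_integrable hb₁) (sqLogKer_integrable hb₂)] at key
  rw [← sqLogKer_integral_eq ha₁, ← sqLogKer_integral_eq ha₂, ← sqLogKer_integral_eq ha₃,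
    ← sqLogKer_integral_eq hb₁, ← sqLogKer_integral_eq hb₂, ← sqLogKer_integral_eq hb₃]
  exact key
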